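/- Let x, y, u, v ∈ ℝ^{n+1} satisfy ⟨x, x⟩ = ⟨y, y⟩, ⟨u, u⟩ = ⟨v, v⟩, ⟨x+y, e⟩ ≠ 0 and ⟨u+v, e⟩ ≠ 0, and set x̂ = P₁(x,y), ŷ = P₂(x,y), û = P₁(u,v), v̂ = P₂(u,v). Then ‖x̂ − û‖ = ‖ŷ − v̂‖ if and only if ⟨x, u⟩ = ⟨y, v⟩, where ‖·‖ is the Euclidean norm on ℝⁿ. -/

import Mathlib

open scoped BigOperators

noncomputable section

/-- The Minkowski product on `ℝ^{n+1}`: `⟨x,y⟩ = -x₀y₀ + ∑_{i=1}^n xᵢyᵢ`. -/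
def mink {n : ℕ} (x y : Fin (n + 1) → ℝ) : ℝ :=
  -(x 0 * y 0) + ∑ i : Fin n, x i.succ * y i.succ

/-- The vector `e = (1, 0, …, 0)` in `ℝ^{n+1}`. -/
def eVec (n : ℕ) : Fin (n + 1) → ℝ := fun i => if i = 0 then 1 else 0

/-- Projection `𝒫 : ℝ^{n+1} → ℝⁿ`, forgetting the 0-th coordinate, landing in
Euclidean space (with the Euclidean norm). -/
def proj {n : ℕ} (x : Fin (n + 1) → ℝ) : EuclideanSpace ℝ (Fin n) :=
  WithLp.toLp 2 (fun i : Fin n => x i.succ)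

/-- The hyperboloid model `Hⁿ = {x : ⟨x,x⟩ = -1, x₀ > 0}`. -/
def Hyp (n : ℕ) : Set (Fin (n + 1) → ℝ) := {x | mink x x = -1 ∧ 0 < x 0}

/-- First component of the Pogorelov map: `P₁(x,y) = 2𝒫(x)/(-⟨x+y,e⟩)`. -/
def P1 {n : ℕ} (x y : Fin (n + 1) → ℝ) : EuclideanSpace ℝ (Fin n) :=
  (2 / (-(mink (x + y) (eVec n)))) • proj x

/-- Second component of the Pogorelov map: `P₂(x,y) = 2𝒫(y)/(-⟨x+y,e⟩)`. -/
def P2 {n : ℕ} (x y : Fin (n + 1) → ℝ) : EuclideanSpace ℝ (Fin n) :=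
  (2 / (-(mink (x + y) (eVec n)))) • proj y

/-- The function `f(a,b) = (2+‖a‖+‖b‖)(2-‖a‖+‖b‖)(2+‖a‖-‖b‖)(2-‖a‖-‖b‖)`. -/
def fQ {n : ℕ} (a b : EuclideanSpace ℝ (Fin n)) : ℝ :=
  (2 + ‖a‖ + ‖b‖) * (2 - ‖a‖ + ‖b‖) * (2 + ‖a‖ - ‖b‖) * (2 - ‖a‖ - ‖b‖)

/-- The vector in `ℝ^{n+1}` with 0-th coordinate `t` and `𝒫`-projection `v`. -/
def liftVec {n : ℕ} (t : ℝ) (v : EuclideanSpace ℝ (Fin n)) : Fin (n + 1) → ℝ :=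
  Fin.cons t (fun i => v i)

/-- First component of `Ψ(a,b)`, namely `(√(‖x̂‖²+1), x̂)` with `x̂ = 4a/√f(a,b)`. -/
def Psi1 {n : ℕ} (a b : EuclideanSpace ℝ (Fin n)) : Fin (n + 1) → ℝ :=
  liftVec (Real.sqrt (‖(4 / Real.sqrt (fQ a b)) • a‖ ^ 2 + 1)) ((4 / Real.sqrt (fQ a b)) • a)

/-- Second component of `Ψ(a,b)`, namely `(√(‖ŷ‖²+1), ŷ)` with `ŷ = 4b/√f(a,b)`. -/
def Psi2 {n : ℕ} (a b : EuclideanSpace ℝ (Fin n)) : Fin (n + 1) → ℝ :=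
  liftVec (Real.sqrt (‖(4 / Real.sqrt (fQ a b)) • b‖ ^ 2 + 1)) ((4 / Real.sqrt (fQ a b)) • b)


open RealInnerProductSpace in
private lemma mink_eVec' {n : ℕ} (z : Fin (n + 1) → ℝ) : mink z (eVec n) = -(z 0) := by
  simp [mink, eVec, Fin.succ_ne_zero]

open RealInnerProductSpace in
private lemma inner_proj' {n : ℕ} (a b : Fin (n + 1) → ℝ) :
    ⟪proj a, proj b⟫ = mink a b + a 0 * b 0 := by
  simp only [PiLp.inner_apply, RCLike.inner_apply, proj, mink, conj_trivial, PiLp.toLp_apply]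
  simp only [mul_comm (b _)]
  ring

open RealInnerProductSpace in
/-- `‖x̂ − û‖ = ‖ŷ − v̂‖` iff `⟨x,u⟩ = ⟨y,v⟩`. -/
theorem statement_1 {n : ℕ} (hn : 1 ≤ n) (x y u v : Fin (n + 1) → ℝ)
    (hxy : mink x x = mink y y) (huv : mink u u = mink v v)
    (hxy0 : mink (x + y) (eVec n) ≠ 0) (huv0 : mink (u + v) (eVec n) ≠ 0) :
    ‖P1 x y - P1 u v‖ = ‖P2 x y - P2 u v‖ ↔ mink x u = mink y v := by

  have hS : x 0 + y 0 ≠ 0 := by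
    intro h; apply hxy0; rw [mink_eVec']; simp [Pi.add_apply, h]
  have hT : u 0 + v 0 ≠ 0 := by
    intro h; apply huv0; rw [mink_eVec']; simp [Pi.add_apply, h]
  have hSdef : (2 : ℝ) / (-(mink (x + y) (eVec n))) = 2 / (x 0 + y 0) := by
    rw [mink_eVec']; simp [Pi.add_apply]
  have hTdef : (2 : ℝ) / (-(mink (u + v) (eVec n))) = 2 / (u 0 + v 0) := by
    rw [mink_eVec']; simp [Pi.add_apply]
  have key : ‖P1 x y - P1 u v‖ ^ 2 - ‖P2 x y - P2 u v‖ ^ 2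
      = (8 / ((x 0 + y 0) * (u 0 + v 0))) * (mink y v - mink x u) := by
    rw [show ‖P1 x y - P1 u v‖ ^ 2 = ‖P1 x y‖ ^ 2 - 2 * ⟪P1 x y, P1 u v⟫ + ‖P1 u v‖ ^ 2
        from norm_sub_sq_real _ _,
      show ‖P2 x y - P2 u v‖ ^ 2 = ‖P2 x y‖ ^ 2 - 2 * ⟪P2 x y, P2 u v⟫ + ‖P2 u v‖ ^ 2
        from norm_sub_sq_real _ _]
    simp only [P1, P2, hSdef, hTdef, ← real_inner_self_eq_norm_sq,
      real_inner_smul_left, real_inner_smul_right, inner_proj']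
    rw [hxy, huv]
    field_simp
    ring
  constructor
  · intro h
    have h2 : (8 / ((x 0 + y 0) * (u 0 + v 0))) * (mink y v - mink x u) = 0 := by
      rw [← key, h]; ring
    have h8 : (8 : ℝ) / ((x 0 + y 0) * (u 0 + v 0)) ≠ 0 := by
      positivity
    have := (mul_eq_zero.1 h2).resolve_left h8
    linarith
  · intro h
    have h2 : ‖P1 x y - P1 u v‖ ^ 2 = ‖P2 x y - P2 u v‖ ^ 2 := by
      have := key; rw [h] at this; linarith
    exact (sq_eq_sq₀ (norm_nonneg _) (norm_nonneg _)).1 h2
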